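/- There exist constants δ > 0 and C > 0 such that for every E > 0 and every x ∈ ℝ² with 0 < 2π√E‖x‖ ≤ δ, setting t = 2π√E‖x‖, one has J₀(t)² < 1 and the conditional-variance determinant quantity Ψ_E(x) := | 2π²E ( 2π²E − 4π²E J₁(t)² / (1 − J₀(t)²) ) | / (1 − J₀(t)²) satisfies | Ψ_E(x) − (1/8)(2π²E)² | ≤ C E³ ‖x‖². In particular Ψ_E(x) = (1/8)(2π²E)² + E³ O(‖x‖²) as x → 0, with the implied constant independent of E. -/

import Mathlib

open Real MeasureTheory

/-- Bessel function of the first kind of order `n`, defined by its power series. -/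
noncomputable def besselJ (n : ℕ) (t : ℝ) : ℝ :=
  ∑' m : ℕ, ((-1 : ℝ) ^ m / (Nat.factorial m * Nat.factorial (m + n))) * (t / 2) ^ (2 * m + n)

/-- The conditional-variance determinant quantity
`Ψ_E(x) = |det Ω_E(x)| / (1 − r^E(x)²)`, expressed via Bessel functions with
`t = 2π√E‖x‖`: here `det Ω_E(x) = 2π²E (2π²E − 4π²E J₁(t)²/(1 − J₀(t)²))` and
`r^E(x) = J₀(t)`. -/
noncomputable def PsiE (E : ℝ) (x : EuclideanSpace ℝ (Fin 2)) : ℝ :=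
  |2 * Real.pi ^ 2 * E *
      (2 * Real.pi ^ 2 * E -
        4 * Real.pi ^ 2 * E * (besselJ 1 (2 * Real.pi * Real.sqrt E * ‖x‖)) ^ 2 /
          (1 - (besselJ 0 (2 * Real.pi * Real.sqrt E * ‖x‖)) ^ 2))| /
    (1 - (besselJ 0 (2 * Real.pi * Real.sqrt E * ‖x‖)) ^ 2)


lemma tail_bound (g : ℕ → ℝ) (c : ℝ) (h : ∀ m, |g m| ≤ c * (1/4 : ℝ)^m) :
    |∑' m, g m| ≤ (4/3) * c := by
  have hgeo : Summable (fun m : ℕ => c * (1/4 : ℝ)^m) :=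
    (summable_geometric_of_lt_one (by norm_num) (by norm_num)).mul_left c
  have habs : Summable (fun m => |g m|) :=
    Summable.of_nonneg_of_le (fun m => abs_nonneg _) h hgeo
  have hnorm : Summable (fun m => ‖g m‖) := by simpa using habs
  have h1 : ‖∑' m, g m‖ ≤ ∑' m, ‖g m‖ := norm_tsum_le_tsum_norm hnorm
  rw [Real.norm_eq_abs] at h1
  have h2 : ∑' m, ‖g m‖ ≤ ∑' m, c * (1/4 : ℝ)^m := by
    refine Summable.tsum_le_tsum (fun m => ?_) hnorm hgeo
    simpa using h m
  have h3 : ∑' m : ℕ, c * (1/4 : ℝ)^m = (4/3) * c := by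
    rw [tsum_mul_left, tsum_geometric_of_lt_one (by norm_num) (by norm_num)]
    norm_num; ring
  linarith

lemma besselJ_term_bound (n : ℕ) (t : ℝ) (ht : 0 ≤ t) (ht1 : t ≤ 1) (m : ℕ) :
    |((-1 : ℝ) ^ m / (Nat.factorial m * Nat.factorial (m + n))) * (t / 2) ^ (2 * m + n)|
      ≤ (t/2) ^ (2 * m + n) / (Nat.factorial m * Nat.factorial (m + n)) := by
  have hpos : (0:ℝ) < (Nat.factorial m : ℝ) * (Nat.factorial (m+n) : ℝ) := by positivity
  rw [abs_mul, abs_div, abs_pow, abs_pow, abs_neg, abs_one, one_pow, abs_mul,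
    Nat.abs_cast, Nat.abs_cast, abs_of_nonneg (by linarith : (0:ℝ) ≤ t/2)]
  rw [div_mul_eq_mul_div, one_mul]

lemma besselJ_term_bound' (n : ℕ) (t : ℝ) (ht : 0 ≤ t) (ht1 : t ≤ 1) (m : ℕ) :
    |((-1 : ℝ) ^ m / (Nat.factorial m * Nat.factorial (m + n))) * (t / 2) ^ (2 * m + n)|
      ≤ (1/4 : ℝ) ^ m := by
  refine (besselJ_term_bound n t ht ht1 m).trans ?_
  have hpos : (1:ℝ) ≤ (Nat.factorial m : ℝ) * (Nat.factorial (m+n) : ℝ) := by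
    have h1 : (1:ℝ) ≤ (Nat.factorial m : ℝ) := by exact_mod_cast Nat.one_le_iff_ne_zero.2 (Nat.factorial_ne_zero m)
    have h2 : (1:ℝ) ≤ (Nat.factorial (m+n) : ℝ) := by exact_mod_cast Nat.one_le_iff_ne_zero.2 (Nat.factorial_ne_zero (m+n))
    nlinarith
  have h3 : (t/2) ^ (2*m+n) ≤ (1/2 : ℝ) ^ (2*m+n) :=
    pow_le_pow_left₀ (by linarith) (by linarith) _
  have h4 : ((1:ℝ)/2) ^ (2*m+n) ≤ (1/2 : ℝ) ^ (2*m) :=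
    pow_le_pow_of_le_one (by norm_num) (by norm_num) (by omega)
  have h5 : ((1:ℝ)/2) ^ (2*m) = (1/4 : ℝ) ^ m := by rw [pow_mul]; norm_num
  have h6 : (t/2) ^ (2*m+n) / ((Nat.factorial m : ℝ) * (Nat.factorial (m+n) : ℝ)) ≤ (t/2) ^ (2*m+n) := by
    apply div_le_self (by positivity) hpos
  linarith

lemma besselJ_summable (n : ℕ) (t : ℝ) (ht : 0 ≤ t) (ht1 : t ≤ 1) :
    Summable (fun m : ℕ => ((-1 : ℝ) ^ m / (Nat.factorial m * Nat.factorial (m + n))) * (t / 2) ^ (2 * m + n)) := by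
  have hgeo : Summable (fun m : ℕ => (1/4 : ℝ)^m) :=
    summable_geometric_of_lt_one (by norm_num) (by norm_num)
  exact (Summable.of_nonneg_of_le (fun m => abs_nonneg _)
    (fun m => besselJ_term_bound' n t ht ht1 m) hgeo).of_abs

lemma besselJ_tail_term_bound (n k : ℕ) (t : ℝ) (ht : 0 ≤ t) (ht1 : t ≤ 1) (m : ℕ) :
    |((-1 : ℝ) ^ (m+k) / (Nat.factorial (m+k) * Nat.factorial ((m+k) + n))) * (t / 2) ^ (2 * (m+k) + n)|
      ≤ (t/2) ^ (2*k+n) * (1/4 : ℝ) ^ m := by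
  refine (besselJ_term_bound n t ht ht1 (m+k)).trans ?_
  have hpos : (1:ℝ) ≤ (Nat.factorial (m+k) : ℝ) * (Nat.factorial ((m+k)+n) : ℝ) := by
    have h1 : (1:ℝ) ≤ (Nat.factorial (m+k) : ℝ) := by exact_mod_cast Nat.one_le_iff_ne_zero.2 (Nat.factorial_ne_zero _)
    have h2 : (1:ℝ) ≤ (Nat.factorial ((m+k)+n) : ℝ) := by exact_mod_cast Nat.one_le_iff_ne_zero.2 (Nat.factorial_ne_zero _)
    nlinarith
  have h6 : (t/2) ^ (2*(m+k)+n) / ((Nat.factorial (m+k) : ℝ) * (Nat.factorial ((m+k)+n) : ℝ)) ≤ (t/2) ^ (2*(m+k)+n) :=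
    div_le_self (by positivity) hpos
  have h7 : (t/2) ^ (2*(m+k)+n) = (t/2) ^ (2*k+n) * ((t/2)^2) ^ m := by
    rw [← pow_mul, ← pow_add]; ring_nf
  have h8 : ((t/2)^2 : ℝ) ^ m ≤ (1/4 : ℝ) ^ m := by
    apply pow_le_pow_left₀ (by positivity)
    nlinarith
  have h9 : (0:ℝ) ≤ (t/2) ^ (2*k+n) := by positivity
  calc (t/2) ^ (2*(m+k)+n) / ((Nat.factorial (m+k) : ℝ) * (Nat.factorial ((m+k)+n) : ℝ))
      ≤ (t/2) ^ (2*(m+k)+n) := h6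
    _ = (t/2) ^ (2*k+n) * ((t/2)^2) ^ m := h7
    _ ≤ (t/2) ^ (2*k+n) * (1/4 : ℝ) ^ m := by
        exact mul_le_mul_of_nonneg_left h8 h9

lemma besselJ0_approx (t : ℝ) (ht : 0 ≤ t) (ht1 : t ≤ 1) :
    |besselJ 0 t - (1 - t^2/4 + t^4/64)| ≤ t^6/32 := by
  set f : ℕ → ℝ := fun m => ((-1 : ℝ) ^ m / (Nat.factorial m * Nat.factorial (m + 0))) * (t / 2) ^ (2 * m + 0) with hf
  have hsum : Summable f := besselJ_summable 0 t ht ht1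
  have hsplit : ∑ i ∈ Finset.range 3, f i + ∑' m, f (m + 3) = ∑' m, f m :=
    Summable.sum_add_tsum_nat_add 3 hsum
  have hhead : ∑ i ∈ Finset.range 3, f i = 1 - t^2/4 + t^4/64 := by
    rw [Finset.sum_range_succ, Finset.sum_range_succ, Finset.sum_range_one]
    simp [hf, Nat.factorial]
    ring
  have htail : |∑' m, f (m + 3)| ≤ (4/3) * ((t/2)^(2*3+0) : ℝ) := by
    exact tail_bound _ _ (fun m => besselJ_tail_term_bound 0 3 t ht ht1 m)
  have heq : besselJ 0 t - (1 - t^2/4 + t^4/64) = ∑' m, f (m + 3) := by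
    rw [besselJ, ← hsplit, hhead]; ring
  rw [heq]
  refine htail.trans ?_
  have : ((t/2)^(2*3+0) : ℝ) = t^6/64 := by ring
  rw [this]; nlinarith [pow_nonneg ht 6]

lemma besselJ1_approx (t : ℝ) (ht : 0 ≤ t) (ht1 : t ≤ 1) :
    |besselJ 1 t - (t/2 - t^3/16)| ≤ t^5/24 := by
  set f : ℕ → ℝ := fun m => ((-1 : ℝ) ^ m / (Nat.factorial m * Nat.factorial (m + 1))) * (t / 2) ^ (2 * m + 1) with hf
  have hsum : Summable f := besselJ_summable 1 t ht ht1
  have hsplit : ∑ i ∈ Finset.range 2, f i + ∑' m, f (m + 2) = ∑' m, f m :=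
    Summable.sum_add_tsum_nat_add 2 hsum
  have hhead : ∑ i ∈ Finset.range 2, f i = t/2 - t^3/16 := by
    rw [Finset.sum_range_succ, Finset.sum_range_one]
    simp [hf, Nat.factorial]
    ring
  have htail : |∑' m, f (m + 2)| ≤ (4/3) * ((t/2)^(2*2+1) : ℝ) := by
    exact tail_bound _ _ (fun m => besselJ_tail_term_bound 1 2 t ht ht1 m)
  have heq : besselJ 1 t - (t/2 - t^3/16) = ∑' m, f (m + 2) := by
    rw [besselJ, ← hsplit, hhead]; ring
  rw [heq]
  refine htail.trans ?_
  have : ((t/2)^(2*2+1) : ℝ) = t^5/32 := by ring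
  rw [this]; nlinarith [pow_nonneg ht 5]


set_option maxHeartbeats 1000000 in
lemma key_alg (t J0 J1 : ℝ) (ht : 0 < t) (ht' : t ≤ 1/4)
    (h0 : |J0 - (1 - t^2/4 + t^4/64)| ≤ t^6/32)
    (h1 : |J1 - (t/2 - t^3/16)| ≤ t^5/24) :
    0 < 1 - J0^2 ∧ 0 < 1 - J0^2 - 2*J1^2 ∧
      |(1 - J0^2 - 2*J1^2)/(1-J0^2)^2 - 1/8| ≤ 6*t^2 := by
  obtain ⟨e0, hJ0, he0⟩ : ∃ e, J0 = (1 - t^2/4 + t^4/64) + e ∧ |e| ≤ t^6/32 :=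
    ⟨J0 - (1 - t^2/4 + t^4/64), by ring, h0⟩
  obtain ⟨e1, hJ1, he1⟩ : ∃ e, J1 = (t/2 - t^3/16) + e ∧ |e| ≤ t^5/24 :=
    ⟨J1 - (t/2 - t^3/16), by ring, h1⟩
  subst hJ0 hJ1
  have ht2 : t^2 ≤ 1/16 := by nlinarith
  have ht4 : t^4 ≤ t^2/16 := by nlinarith
  have ht6 : t^6 ≤ t^4/16 := by nlinarith [pow_pos ht 4]
  have ht8 : t^8 ≤ t^6/16 := by nlinarith [pow_pos ht 6]
  have ht2p : 0 < t^2 := pow_pos ht 2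
  have ht4p : 0 < t^4 := pow_pos ht 4
  have ht6p : 0 < t^6 := pow_pos ht 6
  have ht8p : 0 < t^8 := pow_pos ht 8
  have ht6le1 : t^6 ≤ 1 := by linarith
  have ht12 : t^12 ≤ t^6 := by
    nlinarith [mul_nonneg (le_of_lt ht6p) (by linarith : (0:ℝ) ≤ 1 - t^6)]
  have ht10 : t^10 ≤ t^6 := by
    nlinarith [mul_nonneg (le_of_lt ht6p) (by nlinarith : (0:ℝ) ≤ 1 - t^4)]
  obtain ⟨e0l, e0u⟩ := abs_le.mp he0
  obtain ⟨e1l, e1u⟩ := abs_le.mp he1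
  have hP0pos : (0:ℝ) < 1 - t^2/4 + t^4/64 := by nlinarith
  have hP0le : 1 - t^2/4 + t^4/64 ≤ 1 := by nlinarith
  have hP1pos : (0:ℝ) ≤ t/2 - t^3/16 := by nlinarith
  have hP1le : t/2 - t^3/16 ≤ t/2 := by nlinarith
  -- cross terms
  have hm0 : (1 - t^2/4 + t^4/64) * |e0| ≤ 1 * (t^6/32) :=
    mul_le_mul hP0le he0 (abs_nonneg e0) (by norm_num)
  have hc0 : |(1 - t^2/4 + t^4/64) * e0| ≤ t^6/32 := by
    rw [abs_mul, abs_of_pos hP0pos]; linarith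
  obtain ⟨c0l, c0u⟩ := abs_le.mp hc0
  have hm1 : (t/2 - t^3/16) * |e1| ≤ (t/2) * (t^5/24) :=
    mul_le_mul hP1le he1 (abs_nonneg e1) (by linarith)
  have hm1' : (t/2) * (t^5/24) = t^6/48 := by ring
  have hc1 : |(t/2 - t^3/16) * e1| ≤ t^6/48 := by
    rw [abs_mul, abs_of_nonneg hP1pos]; linarith
  obtain ⟨c1l, c1u⟩ := abs_le.mp hc1
  have hm2 : |e0| * |e0| ≤ (t^6/32) * (t^6/32) :=
    mul_le_mul he0 he0 (abs_nonneg e0) (by positivity)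
  have he0sq : e0^2 ≤ t^6/128 := by
    have h' : |e0| * |e0| = e0^2 := by rw [← abs_mul, abs_mul_self]; ring
    have h12 : (t^6/32) * (t^6/32) = t^12/1024 := by ring
    rw [h', h12] at hm2; linarith
  have hm3 : |e1| * |e1| ≤ (t^5/24) * (t^5/24) :=
    mul_le_mul he1 he1 (abs_nonneg e1) (by positivity)
  have he1sq : e1^2 ≤ t^6/128 := by
    have h' : |e1| * |e1| = e1^2 := by rw [← abs_mul, abs_mul_self]; ring
    have h10 : (t^5/24) * (t^5/24) = t^10/576 := by ring
    rw [h', h10] at hm3; linarith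
  have hsq0 : 0 ≤ e0^2 := sq_nonneg e0
  have hsq1 : 0 ≤ e1^2 := sq_nonneg e1
  -- refined bounds on D = 1 - J0² and 2J1²
  have hidD : 1 - ((1 - t^2/4 + t^4/64) + e0)^2
      = t^2/2 - 3*t^4/32 + t^6/128 - t^8/4096 - 2*((1 - t^2/4 + t^4/64) * e0) - e0^2 := by ring
  have hidJ : 2*((t/2 - t^3/16) + e1)^2
      = t^2/2 - t^4/8 + t^6/128 + 4*((t/2 - t^3/16) * e1) + 2*e1^2 := by ring
  have hDu : 1 - ((1 - t^2/4 + t^4/64) + e0)^2 - (t^2/2 - 3*t^4/32) ≤ t^6/8 := by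
    rw [hidD]; linarith
  have hDl : -(t^6/8) ≤ 1 - ((1 - t^2/4 + t^4/64) + e0)^2 - (t^2/2 - 3*t^4/32) := by
    rw [hidD]; linarith
  have hJu : 2*((t/2 - t^3/16) + e1)^2 - (t^2/2 - t^4/8) ≤ t^6/8 := by
    rw [hidJ]; linarith
  have hJl : -(t^6/8) ≤ 2*((t/2 - t^3/16) + e1)^2 - (t^2/2 - t^4/8) := by
    rw [hidJ]; linarith
  set D : ℝ := 1 - ((1 - t^2/4 + t^4/64) + e0)^2 with hD
  set S : ℝ := 2*((t/2 - t^3/16) + e1)^2 with hS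
  clear_value D S
  clear hidD hidJ c0l c0u c1l c1u hm0 hm1 hm2 hm3 he0sq he1sq e0l e0u e1l e1u hc0 hc1 he0 he1 hsq0 hsq1 h0 h1 hm1'
  -- D bounds
  have hDpos : t^2/4 ≤ D := by linarith
  have hDub : D ≤ t^2 := by linarith
  have hDhalf_u : D - t^2/2 ≤ t^4/8 := by linarith
  have hDhalf_l : -(t^4/8) ≤ D - t^2/2 := by linarith
  -- N bounds
  have hNu : D - S - t^4/32 ≤ t^6/4 := by linarith
  have hNl : -(t^6/4) ≤ D - S - t^4/32 := by linarith
  have hNpos : 0 < D - S := by linarith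
  refine ⟨by linarith, hNpos, ?_⟩
  -- D² bounds
  have hDgt : 0 < D := by linarith
  have hD2pos : 0 < D^2 := pow_pos hDgt 2
  have hDsq_l : t^4/16 ≤ D^2 := by
    have h := pow_le_pow_left₀ (by positivity : (0:ℝ) ≤ t^2/4) hDpos 2
    have he : ((t:ℝ)^2/4)^2 = t^4/16 := by ring
    linarith
  have hDsq : |D^2 - t^4/4| ≤ t^6/4 := by
    have hfac : D^2 - t^4/4 = (D - t^2/2)*(D + t^2/2) := by ring
    rw [hfac, abs_mul, abs_of_pos (by linarith : (0:ℝ) < D + t^2/2)]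
    have h1' : |D - t^2/2| ≤ t^4/8 := abs_le.mpr ⟨hDhalf_l, hDhalf_u⟩
    have h2' : D + t^2/2 ≤ 2*t^2 := by linarith
    have h3' := mul_le_mul h1' h2' (by linarith) (by positivity)
    have h4' : t^4/8 * (2*t^2) = t^6/4 := by ring
    linarith
  obtain ⟨dsl, dsu⟩ := abs_le.mp hDsq
  have h8 : |8*(D - S) - D^2| ≤ 3*t^6 := by
    rw [abs_le]; constructor <;> linarith
  have key : (D - S)/D^2 - 1/8 = (8*(D - S) - D^2) / (8*D^2) := by
    field_simp
  rw [key, abs_div, abs_of_pos (by linarith : (0:ℝ) < 8*D^2)]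
  rw [div_le_iff₀ (by linarith : (0:ℝ) < 8*D^2)]
  calc |8*(D - S) - D^2| ≤ 3*t^6 := h8
    _ ≤ 6*t^2 * (8*(t^4/16)) := le_of_eq (by ring)
    _ ≤ 6*t^2 * (8*D^2) := by
        have h := mul_le_mul_of_nonneg_left hDsq_l (by positivity : (0:ℝ) ≤ 6*t^2*8)
        calc 6*t^2 * (8*(t^4/16)) = 6*t^2*8*(t^4/16) := by ring
          _ ≤ 6*t^2*8*D^2 := h
          _ = 6*t^2 * (8*D^2) := by ring

/-- There are `δ, C > 0` such that for every `E > 0` and every `x ∈ ℝ²` with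
`0 < 2π√E‖x‖ ≤ δ` one has `J₀(2π√E‖x‖)² < 1` and
`|Ψ_E(x) − (1/8)(2π²E)²| ≤ C E³ ‖x‖²`; that is,
`Ψ_E(x) = (1/8)(2π²E)² + E³ O(‖x‖²)` as `x → 0`, uniformly in `E`. -/
theorem PsiE_taylor_expansion :
    ∃ δ : ℝ, 0 < δ ∧ ∃ C : ℝ, 0 < C ∧
      ∀ E : ℝ, 0 < E → ∀ x : EuclideanSpace ℝ (Fin 2),
        0 < 2 * Real.pi * Real.sqrt E * ‖x‖ →
        2 * Real.pi * Real.sqrt E * ‖x‖ ≤ δ →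
        (besselJ 0 (2 * Real.pi * Real.sqrt E * ‖x‖)) ^ 2 < 1 ∧
        |PsiE E x - (1 / 8) * (2 * Real.pi ^ 2 * E) ^ 2| ≤ C * E ^ 3 * ‖x‖ ^ 2 := by
  refine ⟨1/4, by norm_num, 96 * Real.pi^6, by positivity, ?_⟩
  intro E hE x hxpos hxle
  have h0 := besselJ0_approx _ hxpos.le (by linarith)
  have h1 := besselJ1_approx _ hxpos.le (by linarith)
  obtain ⟨hD, hN, hkey⟩ := key_alg _ _ _ hxpos hxle h0 h1
  refine ⟨by linarith, ?_⟩
  have hEc : 0 < 2 * Real.pi^2 * E := by positivity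
  have hPsi : PsiE E x = (2*Real.pi^2*E)^2 *
      ((1 - (besselJ 0 (2 * Real.pi * Real.sqrt E * ‖x‖))^2
          - 2*(besselJ 1 (2 * Real.pi * Real.sqrt E * ‖x‖))^2)
        / (1 - (besselJ 0 (2 * Real.pi * Real.sqrt E * ‖x‖))^2)^2) := by
    have main : ∀ J0 J1 : ℝ, 0 < 1 - J0^2 → 0 < 1 - J0^2 - 2*J1^2 →
        |2*Real.pi^2*E * (2*Real.pi^2*E - 4*Real.pi^2*E*J1^2/(1-J0^2))| / (1-J0^2)
          = (2*Real.pi^2*E)^2 * ((1-J0^2-2*J1^2)/(1-J0^2)^2) := by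
      intro J0 J1 hD hN
      have hDne : (1 : ℝ) - J0^2 ≠ 0 := ne_of_gt hD
      have h2 : 2*Real.pi^2*E - 4*Real.pi^2*E*J1^2/(1-J0^2)
          = (2*Real.pi^2*E) * ((1-J0^2-2*J1^2)/(1-J0^2)) := by
        field_simp; ring
      rw [h2, abs_of_pos (mul_pos hEc (mul_pos hEc (div_pos hN hD)))]
      field_simp
    simpa only [PsiE] using main _ _ hD hN
  have hsq : (2 * Real.pi * Real.sqrt E * ‖x‖)^2 = 4*Real.pi^2*E*‖x‖^2 := by
    rw [mul_pow, mul_pow, mul_pow, Real.sq_sqrt hE.le]; ring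
  have hdiff : PsiE E x - (1/8) * (2*Real.pi^2*E)^2
      = (2*Real.pi^2*E)^2 *
        ((1 - (besselJ 0 (2 * Real.pi * Real.sqrt E * ‖x‖))^2
            - 2*(besselJ 1 (2 * Real.pi * Real.sqrt E * ‖x‖))^2)
          / (1 - (besselJ 0 (2 * Real.pi * Real.sqrt E * ‖x‖))^2)^2 - 1/8) := by
    rw [hPsi]; ring
  rw [hdiff, abs_mul, abs_of_pos (pow_pos hEc 2)]
  calc (2*Real.pi^2*E)^2 * |_| ≤ (2*Real.pi^2*E)^2 * (6 * (2 * Real.pi * Real.sqrt E * ‖x‖)^2) := by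
        exact mul_le_mul_of_nonneg_left hkey (le_of_lt (pow_pos hEc 2))
    _ = 96 * Real.pi^6 * E^3 * ‖x‖^2 := by rw [hsq]; ring
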